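/- Let C_{Γ(LP2,ω,1)} be the class of all finite Kripke models whose frame consists of a root x and finitely many (at least one) pairwise disjoint nonempty finite sets C⁰,…,C^j not containing x, where the accessibility relation R is the reflexive relation with C^k×C^k ⊆ R for each k, x R y for every world y, and no other pairs (a root below finitely many finite clusters of final worlds). Then C_{Γ(LP2,ω,1)} enjoys 3-IP. -/

import Mathlib

/-- Modal formulas over countably many variables. -/
inductive ModalForm : Type where
  | var : ℕ → ModalForm
  | bot : ModalForm
  | and : ModalForm → ModalForm → ModalForm
  | or : ModalForm → ModalForm → ModalForm
  | not : ModalForm → ModalForm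
  | imp : ModalForm → ModalForm → ModalForm
  | box : ModalForm → ModalForm

namespace ModalForm

mutual
  /-- positively occurring variables -/
  def vpos : ModalForm → Finset ℕ
    | var p => {p}
    | bot => ∅
    | and φ ψ => vpos φ ∪ vpos ψ
    | or φ ψ => vpos φ ∪ vpos ψ
    | not φ => vneg φ
    | imp φ ψ => vneg φ ∪ vpos ψ
    | box φ => vpos φ
  /-- negatively occurring variables -/
  def vneg : ModalForm → Finset ℕ
    | var _ => ∅
    | bot => ∅
    | and φ ψ => vneg φ ∪ vneg ψ
    | or φ ψ => vneg φ ∪ vneg ψ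
    | not φ => vpos φ
    | imp φ ψ => vpos φ ∪ vneg ψ
    | box φ => vneg φ
end

/-- Modal depth: maximal nesting of `□`. -/
def depth : ModalForm → ℕ
  | var _ => 0
  | bot => 0
  | and φ ψ => max (depth φ) (depth ψ)
  | or φ ψ => max (depth φ) (depth ψ)
  | not φ => depth φ
  | imp φ ψ => max (depth φ) (depth ψ)
  | box φ => depth φ + 1

/-- `◇φ := ¬□¬φ` -/
def dia (φ : ModalForm) : ModalForm := not (box (not φ))

/-- `⊤ := ¬⊥` -/
def top : ModalForm := not bot

end ModalForm

/-- An S4 Kripke frame: nonempty set of worlds with a reflexive transitive relation. -/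
structure KFrame : Type 1 where
  W : Type
  R : W → W → Prop
  nonempty : Nonempty W
  refl : ∀ x, R x x
  trans : ∀ x y z, R x y → R y z → R x z

/-- A Kripke model: a frame with a valuation. -/
structure KModel : Type 1 extends KFrame where
  val : W → ℕ → Prop

/-- The model based on frame `F` with valuation `V`. -/
def KFrame.toModel (F : KFrame) (V : F.W → ℕ → Prop) : KModel :=
  { toKFrame := F, val := V }

/-- Satisfaction in a Kripke model. -/
def KModel.Sat (M : KModel) : M.W → ModalForm → Prop
  | w, .var p => M.val w p
  | _, .bot => False
  | w, .and φ ψ => M.Sat w φ ∧ M.Sat w ψ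
  | w, .or φ ψ => M.Sat w φ ∨ M.Sat w ψ
  | w, .not φ => ¬ M.Sat w φ
  | w, .imp φ ψ => M.Sat w φ → M.Sat w ψ
  | w, .box φ => ∀ y, M.R w y → M.Sat y φ

/-- `(M0,w0) →ₙ^{(P⁺,P⁻)} (M1,w1)`: every `(P⁺,P⁻)`-formula of depth ≤ n
satisfied at `(M0,w0)` is satisfied at `(M1,w1)`. -/
def ModalArrow (Pp Pm : Finset ℕ) (n : ℕ) (M0 : KModel) (w0 : M0.W)
    (M1 : KModel) (w1 : M1.W) : Prop :=
  ∀ φ : ModalForm, φ.vpos ⊆ Pp → φ.vneg ⊆ Pm → φ.depth ≤ n →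
    M0.Sat w0 φ → M1.Sat w1 φ

/-- p-morphism between frames. -/
def PMorphism (F G : KFrame) (f : F.W → G.W) : Prop :=
  (∀ x y, F.R x y → G.R (f x) (f y)) ∧
  (∀ x w, G.R (f x) w → ∃ z, F.R x z ∧ f z = w)

/-- The class `C` of Kripke models enjoys `n`-IP. -/
def EnjoysIP (C : Set KModel) (n : ℕ) : Prop :=
  ∀ (Pp Pm : Finset ℕ) (M0 M1 : KModel), M0 ∈ C → M1 ∈ C →
    ∀ (w0 : M0.W) (w1 : M1.W), ModalArrow Pp Pm n M0 w0 M1 w1 →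
      ∃ (F : KFrame) (wstar : F.W) (f0 : F.W → M0.W) (f1 : F.W → M1.W),
        (∀ V : F.W → ℕ → Prop, F.toModel V ∈ C) ∧
        PMorphism F M0.toKFrame f0 ∧
        PMorphism F M1.toKFrame f1 ∧
        f0 wstar = w0 ∧ f1 wstar = w1 ∧
        ∀ x : F.W, ModalArrow Pp Pm 0 M0 (f0 x) M1 (f1 x)

/-- A world is final iff every successor is also a predecessor. -/
def KModel.Final (M : KModel) (w : M.W) : Prop := ∀ y, M.R w y → M.R y w

/-- The cluster of a world. -/
def KModel.cluster (M : KModel) (w : M.W) : Set M.W := {u | M.R w u ∧ M.R u w}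

/-- Cluster `C0` of `M0` matches cluster `C1` of `M1`. -/
def Matches (Pp Pm : Finset ℕ) (M0 M1 : KModel) (C0 : Set M0.W) (C1 : Set M1.W) : Prop :=
  (∀ u0 ∈ C0, ∃ u1 ∈ C1, ModalArrow Pp Pm 0 M0 u0 M1 u1) ∧
  (∀ u1 ∈ C1, ∃ u0 ∈ C0, ModalArrow Pp Pm 0 M0 u0 M1 u1)

/-- `φ` is satisfied at every world of every model in `C`. -/
def ValidOn (C : Set KModel) (φ : ModalForm) : Prop :=
  ∀ M ∈ C, ∀ w : M.W, M.Sat w φ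

/-- The class of Γ(LP₂,ω,1) models: a root below finitely many (at least one)
nonempty finite clusters of final worlds. -/
def C_LP2o1 : Set KModel :=
  {M | Finite M.W ∧ ∃ (x : M.W) (j : ℕ) (C : Fin (j + 1) → Set M.W),
    (∀ k, x ∉ C k) ∧ (∀ k, (C k).Nonempty) ∧
    (∀ k l, k ≠ l → Disjoint (C k) (C l)) ∧
    (∀ w : M.W, w = x ∨ ∃ k, w ∈ C k) ∧
    ∀ u v : M.W, M.R u v ↔
      (u = v ∨ (∃ k, u ∈ C k ∧ v ∈ C k) ∨ u = x)}

namespace IPAux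
open ModalForm

def conjList : List ModalForm → ModalForm
  | [] => .not .bot
  | φ :: l => .and φ (conjList l)

def disjList : List ModalForm → ModalForm
  | [] => .bot
  | φ :: l => .or φ (disjList l)

lemma sat_conjList (M : KModel) (w : M.W) (l : List ModalForm) :
    M.Sat w (conjList l) ↔ ∀ φ ∈ l, M.Sat w φ := by
  induction l with
  | nil => simp [conjList, KModel.Sat]
  | cons φ l ih => simp [conjList, KModel.Sat, ih]

lemma sat_disjList (M : KModel) (w : M.W) (l : List ModalForm) :
    M.Sat w (disjList l) ↔ ∃ φ ∈ l, M.Sat w φ := by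
  induction l with
  | nil => simp [disjList, KModel.Sat]
  | cons φ l ih => simp [disjList, KModel.Sat, ih]

lemma vpos_conjList {P : Finset ℕ} {l : List ModalForm}
    (h : ∀ φ ∈ l, vpos φ ⊆ P) : vpos (conjList l) ⊆ P := by
  induction l with
  | nil => simp [conjList, vpos, vneg]
  | cons φ l ih =>
    simp only [conjList, vpos, Finset.union_subset_iff]
    exact ⟨h φ (by simp), ih fun ψ hψ => h ψ (by simp [hψ])⟩

lemma vneg_conjList {P : Finset ℕ} {l : List ModalForm}
    (h : ∀ φ ∈ l, vneg φ ⊆ P) : vneg (conjList l) ⊆ P := by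
  induction l with
  | nil => simp [conjList, vpos, vneg]
  | cons φ l ih =>
    simp only [conjList, vneg, Finset.union_subset_iff]
    exact ⟨h φ (by simp), ih fun ψ hψ => h ψ (by simp [hψ])⟩

lemma vpos_disjList {P : Finset ℕ} {l : List ModalForm}
    (h : ∀ φ ∈ l, vpos φ ⊆ P) : vpos (disjList l) ⊆ P := by
  induction l with
  | nil => simp [disjList, vpos]
  | cons φ l ih =>
    simp only [disjList, vpos, Finset.union_subset_iff]
    exact ⟨h φ (by simp), ih fun ψ hψ => h ψ (by simp [hψ])⟩

lemma vneg_disjList {P : Finset ℕ} {l : List ModalForm}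
    (h : ∀ φ ∈ l, vneg φ ⊆ P) : vneg (disjList l) ⊆ P := by
  induction l with
  | nil => simp [disjList, vneg]
  | cons φ l ih =>
    simp only [disjList, vneg, Finset.union_subset_iff]
    exact ⟨h φ (by simp), ih fun ψ hψ => h ψ (by simp [hψ])⟩

lemma depth_conjList {n : ℕ} {l : List ModalForm}
    (h : ∀ φ ∈ l, depth φ ≤ n) : depth (conjList l) ≤ n := by
  induction l with
  | nil => simp [conjList, depth]
  | cons φ l ih =>
    simp only [conjList, depth, max_le_iff]
    exact ⟨h φ (by simp), ih fun ψ hψ => h ψ (by simp [hψ])⟩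

lemma depth_disjList {n : ℕ} {l : List ModalForm}
    (h : ∀ φ ∈ l, depth φ ≤ n) : depth (disjList l) ≤ n := by
  induction l with
  | nil => simp [disjList, depth]
  | cons φ l ih =>
    simp only [disjList, depth, max_le_iff]
    exact ⟨h φ (by simp), ih fun ψ hψ => h ψ (by simp [hψ])⟩

lemma sat_dia (M : KModel) (w : M.W) (φ : ModalForm) :
    M.Sat w (dia φ) ↔ ∃ y, M.R w y ∧ M.Sat y φ := by
  simp [dia, KModel.Sat]

lemma vpos_dia (φ : ModalForm) : vpos (dia φ) = vpos φ := by
  simp [dia, vpos, vneg]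

lemma vneg_dia (φ : ModalForm) : vneg (dia φ) = vneg φ := by
  simp [dia, vpos, vneg]

lemma depth_dia (φ : ModalForm) : depth (dia φ) = depth φ + 1 := by
  simp [dia, depth]

lemma depth_box (φ : ModalForm) : (ModalForm.box φ).depth = φ.depth + 1 := rfl

end IPAux
namespace IPAux
open ModalForm

open scoped Classical in
noncomputable def beta (Pp Pm : Finset ℕ) (M : KModel) (u : M.W) : ModalForm :=
  conjList ((Pp.filter (fun p => M.val u p)).toList.map .var ++
            (Pm.filter (fun p => ¬ M.val u p)).toList.map (fun p => .not (.var p)))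

lemma vpos_beta (Pp Pm : Finset ℕ) (M : KModel) (u : M.W) :
    vpos (beta Pp Pm M u) ⊆ Pp := by
  classical
  apply vpos_conjList
  intro φ hφ
  simp only [List.mem_append, List.mem_map, Finset.mem_toList, Finset.mem_filter] at hφ
  rcases hφ with ⟨p, ⟨hp, _⟩, rfl⟩ | ⟨p, ⟨hp, _⟩, rfl⟩
  · simp [vpos]; exact hp
  · simp [vpos, vneg]

lemma vneg_beta (Pp Pm : Finset ℕ) (M : KModel) (u : M.W) :
    vneg (beta Pp Pm M u) ⊆ Pm := by
  classical
  apply vneg_conjList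
  intro φ hφ
  simp only [List.mem_append, List.mem_map, Finset.mem_toList, Finset.mem_filter] at hφ
  rcases hφ with ⟨p, ⟨hp, _⟩, rfl⟩ | ⟨p, ⟨hp, _⟩, rfl⟩
  · simp [vpos, vneg]
  · simp [vpos, vneg]; exact hp

lemma depth_beta (Pp Pm : Finset ℕ) (M : KModel) (u : M.W) :
    depth (beta Pp Pm M u) ≤ 0 := by
  classical
  apply depth_conjList
  intro φ hφ
  simp only [List.mem_append, List.mem_map, Finset.mem_toList, Finset.mem_filter] at hφ
  rcases hφ with ⟨p, _, rfl⟩ | ⟨p, _, rfl⟩ <;> simp [depth]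

lemma sat_beta_iff (Pp Pm : Finset ℕ) (M : KModel) (u : M.W) (N : KModel) (v : N.W) :
    N.Sat v (beta Pp Pm M u) ↔
      (∀ p ∈ Pp, M.val u p → N.val v p) ∧ (∀ p ∈ Pm, N.val v p → M.val u p) := by
  classical
  rw [beta, sat_conjList]
  constructor
  · intro h
    constructor
    · intro p hp hval
      have := h (.var p) (by simp only [List.mem_append, List.mem_map,
        Finset.mem_toList, Finset.mem_filter]; exact Or.inl ⟨p, ⟨hp, hval⟩, rfl⟩)
      exact this
    · intro p hp hval
      by_contra hnot
      have := h (.not (.var p)) (by simp only [List.mem_append, List.mem_map,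
        Finset.mem_toList, Finset.mem_filter]; exact Or.inr ⟨p, ⟨hp, hnot⟩, rfl⟩)
      exact this hval
  · rintro ⟨h1, h2⟩ φ hφ
    simp only [List.mem_append, List.mem_map, Finset.mem_toList, Finset.mem_filter] at hφ
    rcases hφ with ⟨p, ⟨hp, hval⟩, rfl⟩ | ⟨p, ⟨hp, hval⟩, rfl⟩
    · exact h1 p hp hval
    · exact fun hv => hval (h2 p hp hv)

lemma sat_beta_self (Pp Pm : Finset ℕ) (M : KModel) (u : M.W) :
    M.Sat u (beta Pp Pm M u) :=
  (sat_beta_iff Pp Pm M u M u).2 ⟨fun _ _ h => h, fun _ _ h => h⟩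

lemma sat_mono (Pp Pm : Finset ℕ) (M0 M1 : KModel) (u0 : M0.W) (u1 : M1.W)
    (h1 : ∀ p ∈ Pp, M0.val u0 p → M1.val u1 p)
    (h2 : ∀ p ∈ Pm, M1.val u1 p → M0.val u0 p) :
    ∀ φ : ModalForm, depth φ ≤ 0 →
      ((vpos φ ⊆ Pp → vneg φ ⊆ Pm → M0.Sat u0 φ → M1.Sat u1 φ) ∧
       (vpos φ ⊆ Pm → vneg φ ⊆ Pp → M1.Sat u1 φ → M0.Sat u0 φ)) := by
  intro φ
  induction φ with
  | var p =>
    intro _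
    constructor
    · intro hp _ h
      exact h1 p (hp (by simp [vpos])) h
    · intro hp _ h
      exact h2 p (hp (by simp [vpos])) h
  | bot => intro _; exact ⟨fun _ _ h => h.elim, fun _ _ h => h.elim⟩
  | and φ ψ ihφ ihψ =>
    intro hd
    simp only [depth, max_le_iff] at hd
    simp only [vpos, vneg, Finset.union_subset_iff, KModel.Sat]
    exact ⟨fun hp hm h => ⟨(ihφ hd.1).1 hp.1 hm.1 h.1, (ihψ hd.2).1 hp.2 hm.2 h.2⟩,
           fun hp hm h => ⟨(ihφ hd.1).2 hp.1 hm.1 h.1, (ihψ hd.2).2 hp.2 hm.2 h.2⟩⟩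
  | or φ ψ ihφ ihψ =>
    intro hd
    simp only [depth, max_le_iff] at hd
    simp only [vpos, vneg, Finset.union_subset_iff, KModel.Sat]
    exact ⟨fun hp hm h => h.imp ((ihφ hd.1).1 hp.1 hm.1) ((ihψ hd.2).1 hp.2 hm.2),
           fun hp hm h => h.imp ((ihφ hd.1).2 hp.1 hm.1) ((ihψ hd.2).2 hp.2 hm.2)⟩
  | not φ ihφ =>
    intro hd
    simp only [depth] at hd
    simp only [vpos, vneg, KModel.Sat]
    exact ⟨fun hp hm h hc => h ((ihφ hd).2 hm hp hc),
           fun hp hm h hc => h ((ihφ hd).1 hm hp hc)⟩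
  | imp φ ψ ihφ ihψ =>
    intro hd
    simp only [depth, max_le_iff] at hd
    simp only [vpos, vneg, Finset.union_subset_iff, KModel.Sat]
    exact ⟨fun hp hm h hc => (ihψ hd.2).1 hp.2 hm.2 (h ((ihφ hd.1).2 hm.1 hp.1 hc)),
           fun hp hm h hc => (ihψ hd.2).2 hp.2 hm.2 (h ((ihφ hd.1).1 hm.1 hp.1 hc))⟩
  | box φ _ =>
    intro hd
    simp [depth] at hd

lemma arrow0_iff_beta (Pp Pm : Finset ℕ) (M0 M1 : KModel) (u0 : M0.W) (u1 : M1.W) :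
    ModalArrow Pp Pm 0 M0 u0 M1 u1 ↔ M1.Sat u1 (beta Pp Pm M0 u0) := by
  constructor
  · intro h
    exact h _ (vpos_beta _ _ _ _) (vneg_beta _ _ _ _) (depth_beta _ _ _ _)
      (sat_beta_self _ _ _ _)
  · intro h φ hp hm hd hs
    obtain ⟨h1, h2⟩ := (sat_beta_iff Pp Pm M0 u0 M1 u1).1 h
    exact (sat_mono Pp Pm M0 M1 u0 u1 h1 h2 φ hd).1 hp hm hs

end IPAux
namespace IPAux
open ModalForm

noncomputable def theta (Pp Pm : Finset ℕ) (M : KModel) (s : Finset M.W) : ModalForm :=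
  .and (conjList (s.toList.map fun u => dia (beta Pp Pm M u)))
       (.box (disjList (s.toList.map fun u => beta Pp Pm M u)))

lemma vpos_theta (Pp Pm : Finset ℕ) (M : KModel) (s : Finset M.W) :
    vpos (theta Pp Pm M s) ⊆ Pp := by
  simp only [theta, vpos, Finset.union_subset_iff]
  constructor
  · apply vpos_conjList
    intro φ hφ
    simp only [List.mem_map, Finset.mem_toList] at hφ
    obtain ⟨u, _, rfl⟩ := hφ
    rw [vpos_dia]; exact vpos_beta _ _ _ _
  · apply vpos_disjList
    intro φ hφ
    simp only [List.mem_map, Finset.mem_toList] at hφ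
    obtain ⟨u, _, rfl⟩ := hφ
    exact vpos_beta _ _ _ _

lemma vneg_theta (Pp Pm : Finset ℕ) (M : KModel) (s : Finset M.W) :
    vneg (theta Pp Pm M s) ⊆ Pm := by
  simp only [theta, vneg, Finset.union_subset_iff]
  constructor
  · apply vneg_conjList
    intro φ hφ
    simp only [List.mem_map, Finset.mem_toList] at hφ
    obtain ⟨u, _, rfl⟩ := hφ
    rw [vneg_dia]; exact vneg_beta _ _ _ _
  · apply vneg_disjList
    intro φ hφ
    simp only [List.mem_map, Finset.mem_toList] at hφ
    obtain ⟨u, _, rfl⟩ := hφ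
    exact vneg_beta _ _ _ _

lemma depth_theta (Pp Pm : Finset ℕ) (M : KModel) (s : Finset M.W) :
    depth (theta Pp Pm M s) ≤ 1 := by
  simp only [theta, depth, max_le_iff]
  constructor
  · apply depth_conjList
    intro φ hφ
    simp only [List.mem_map, Finset.mem_toList] at hφ
    obtain ⟨u, _, rfl⟩ := hφ
    rw [depth_dia]
    exact Nat.succ_le_succ (depth_beta _ _ _ _)
  · have : depth (disjList (s.toList.map fun u => beta Pp Pm M u)) ≤ 0 := by
      apply depth_disjList
      intro φ hφ
      simp only [List.mem_map, Finset.mem_toList] at hφ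
      obtain ⟨u, _, rfl⟩ := hφ
      exact depth_beta _ _ _ _
    omega

/-- A final world of a cluster satisfies the cluster's theta formula. -/
lemma sat_theta_self (Pp Pm : Finset ℕ) (M : KModel) (s : Finset M.W) (u : M.W)
    (hu : u ∈ s) (hR : ∀ v w, v ∈ s → (M.R v w ↔ w ∈ s)) :
    M.Sat u (theta Pp Pm M s) := by
  constructor
  · rw [sat_conjList]
    intro φ hφ
    simp only [List.mem_map, Finset.mem_toList] at hφ
    obtain ⟨v, hv, rfl⟩ := hφ
    rw [sat_dia]
    exact ⟨v, (hR u v hu).2 hv, sat_beta_self _ _ _ _⟩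
  · intro y hy
    rw [sat_disjList]
    have hys : y ∈ s := (hR u y hu).1 hy
    refine ⟨beta Pp Pm M y, ?_, sat_beta_self _ _ _ _⟩
    simp only [List.mem_map, Finset.mem_toList]
    exact ⟨y, hys, rfl⟩

/-- If a final world of another model satisfies theta, the clusters match. -/
lemma matches_of_sat_theta (Pp Pm : Finset ℕ) (M0 M1 : KModel) (s : Finset M0.W)
    (t : Set M1.W) (w1 : M1.W) (hw : w1 ∈ t)
    (hR1 : ∀ v u, v ∈ t → (M1.R v u ↔ u ∈ t))
    (hsat : M1.Sat w1 (theta Pp Pm M0 s)) :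
    Matches Pp Pm M0 M1 ↑s t := by
  obtain ⟨hconj, hbox⟩ := hsat
  rw [sat_conjList] at hconj
  constructor
  · intro u0 hu0
    have := hconj (dia (beta Pp Pm M0 u0))
      (by simp only [List.mem_map, Finset.mem_toList]
          exact ⟨u0, by exact_mod_cast hu0, rfl⟩)
    rw [sat_dia] at this
    obtain ⟨y, hy, hsy⟩ := this
    exact ⟨y, (hR1 w1 y hw).1 hy, (arrow0_iff_beta Pp Pm M0 M1 u0 y).2 hsy⟩
  · intro u1 hu1
    have hy : M1.R w1 u1 := (hR1 w1 u1 hw).2 hu1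
    have := hbox u1 hy
    rw [sat_disjList] at this
    obtain ⟨φ, hφ, hsφ⟩ := this
    simp only [List.mem_map, Finset.mem_toList] at hφ
    obtain ⟨u0, hu0, rfl⟩ := hφ
    exact ⟨u0, by exact_mod_cast hu0, (arrow0_iff_beta Pp Pm M0 M1 u0 u1).2 hsφ⟩

end IPAux
namespace IPAux
open ModalForm

def AmW (M0 M1 : KModel) (P : M0.W × M1.W → Prop) : Type :=
  Unit ⊕ {q : M0.W × M1.W // P q}

def AmR (M0 M1 : KModel) (P : M0.W × M1.W → Prop) :
    AmW M0 M1 P → AmW M0 M1 P → Prop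
  | Sum.inl _, _ => True
  | Sum.inr _, Sum.inl _ => False
  | Sum.inr a, Sum.inr b =>
      M0.R a.1.1 b.1.1 ∧ M0.R b.1.1 a.1.1 ∧ M1.R a.1.2 b.1.2 ∧ M1.R b.1.2 a.1.2

lemma AmR_refl (M0 M1 : KModel) (P : M0.W × M1.W → Prop) (a : AmW M0 M1 P) :
    AmR M0 M1 P a a := by
  cases a with
  | inl u => trivial
  | inr q => exact ⟨M0.refl _, M0.refl _, M1.refl _, M1.refl _⟩

lemma AmR_trans (M0 M1 : KModel) (P : M0.W × M1.W → Prop) (a b c : AmW M0 M1 P)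
    (hab : AmR M0 M1 P a b) (hbc : AmR M0 M1 P b c) : AmR M0 M1 P a c := by
  cases a with
  | inl u => trivial
  | inr qa =>
    cases b with
    | inl u => exact hab.elim
    | inr qb =>
      cases c with
      | inl u => exact hbc.elim
      | inr qc =>
        obtain ⟨h1, h2, h3, h4⟩ := hab
        obtain ⟨h5, h6, h7, h8⟩ := hbc
        exact ⟨M0.trans _ _ _ h1 h5, M0.trans _ _ _ h6 h2,
               M1.trans _ _ _ h3 h7, M1.trans _ _ _ h8 h4⟩

def AmFrame (M0 M1 : KModel) (P : M0.W × M1.W → Prop) : KFrame :=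
  ⟨AmW M0 M1 P, AmR M0 M1 P, ⟨Sum.inl ()⟩, AmR_refl M0 M1 P, AmR_trans M0 M1 P⟩

def amf0 (M0 M1 : KModel) (P : M0.W × M1.W → Prop) (w0 : M0.W) : AmW M0 M1 P → M0.W
  | Sum.inl _ => w0
  | Sum.inr q => q.1.1

def amf1 (M0 M1 : KModel) (P : M0.W × M1.W → Prop) (w1 : M1.W) : AmW M0 M1 P → M1.W
  | Sum.inl _ => w1
  | Sum.inr q => q.1.2

lemma master (Pp Pm : Finset ℕ) (M0 M1 : KModel)
    (hfin0 : Finite M0.W) (hfin1 : Finite M1.W)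
    (x0 : M0.W) (j0 : ℕ) (C0 : Fin (j0+1) → Set M0.W)
    (hx0 : ∀ k, x0 ∉ C0 k)
    (hdisj0 : ∀ k l, k ≠ l → Disjoint (C0 k) (C0 l))
    (hR0 : ∀ u v, M0.R u v ↔ (u = v ∨ (∃ k, u ∈ C0 k ∧ v ∈ C0 k) ∨ u = x0))
    (x1 : M1.W) (j1 : ℕ) (C1 : Fin (j1+1) → Set M1.W)
    (hx1 : ∀ k, x1 ∉ C1 k)
    (hdisj1 : ∀ k l, k ≠ l → Disjoint (C1 k) (C1 l))
    (hR1 : ∀ u v, M1.R u v ↔ (u = v ∨ (∃ k, u ∈ C1 k ∧ v ∈ C1 k) ∨ u = x1))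
    (w0 : M0.W) (w1 : M1.W)
    (H0 : ModalArrow Pp Pm 0 M0 w0 M1 w1)
    (S : Set (Fin (j0+1) × Fin (j1+1)))
    (hSm : ∀ p ∈ S, Matches Pp Pm M0 M1 (C0 p.1) (C1 p.2))
    (hSclne : ∀ p ∈ S, (C0 p.1).Nonempty)
    (hSne : S.Nonempty)
    (hfwd0 : ∀ p ∈ S, ∀ u ∈ C0 p.1, M0.R w0 u)
    (hfwd1 : ∀ p ∈ S, ∀ u ∈ C1 p.2, M1.R w1 u)
    (hback0 : ∀ v, M0.R w0 v → v = w0 ∨ ∃ p ∈ S, v ∈ C0 p.1)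
    (hback1 : ∀ v, M1.R w1 v → v = w1 ∨ ∃ p ∈ S, v ∈ C1 p.2) :
    ∃ (F : KFrame) (wstar : F.W) (f0 : F.W → M0.W) (f1 : F.W → M1.W),
      (∀ V : F.W → ℕ → Prop, F.toModel V ∈ C_LP2o1) ∧
      PMorphism F M0.toKFrame f0 ∧
      PMorphism F M1.toKFrame f1 ∧
      f0 wstar = w0 ∧ f1 wstar = w1 ∧
      ∀ x : F.W, ModalArrow Pp Pm 0 M0 (f0 x) M1 (f1 x) := by
  classical
  -- uniqueness of cluster membership
  have hmem0 : ∀ (u : M0.W) (k l), u ∈ C0 k → u ∈ C0 l → k = l := by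
    intro u k l hk hl
    by_contra h
    exact Set.disjoint_left.mp (hdisj0 k l h) hk hl
  have hmem1 : ∀ (u : M1.W) (k l), u ∈ C1 k → u ∈ C1 l → k = l := by
    intro u k l hk hl
    by_contra h
    exact Set.disjoint_left.mp (hdisj1 k l h) hk hl
  set P : M0.W × M1.W → Prop := fun q =>
    ∃ p ∈ S, q.1 ∈ C0 p.1 ∧ q.2 ∈ C1 p.2 ∧ ModalArrow Pp Pm 0 M0 q.1 M1 q.2 with hP
  -- the pair (k,l) of cluster indices is determined in M0 by mutual relatedness
  have key0 : ∀ (a b : M0.W) (ka kb : Fin (j0+1)), a ∈ C0 ka → b ∈ C0 kb →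
      M0.R a b → ka = kb := by
    intro a b ka kb ha hb hab
    rcases (hR0 a b).1 hab with rfl | ⟨k, hk1, hk2⟩ | rfl
    · exact hmem0 a ka kb ha hb
    · exact (hmem0 a ka k ha hk1).trans (hmem0 b k kb hk2 hb)
    · exact absurd ha (hx0 ka)
  have key1 : ∀ (a b : M1.W) (ka kb : Fin (j1+1)), a ∈ C1 ka → b ∈ C1 kb →
      M1.R a b → ka = kb := by
    intro a b ka kb ha hb hab
    rcases (hR1 a b).1 hab with rfl | ⟨k, hk1, hk2⟩ | rfl
    · exact hmem1 a ka kb ha hb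
    · exact (hmem1 a ka k ha hk1).trans (hmem1 b k kb hk2 hb)
    · exact absurd ha (hx1 ka)
  have hclR0 : ∀ (k : Fin (j0+1)) (a b : M0.W), a ∈ C0 k → b ∈ C0 k → M0.R a b :=
    fun k a b ha hb => (hR0 a b).2 (Or.inr (Or.inl ⟨k, ha, hb⟩))
  have hclR1 : ∀ (k : Fin (j1+1)) (a b : M1.W), a ∈ C1 k → b ∈ C1 k → M1.R a b :=
    fun k a b ha hb => (hR1 a b).2 (Or.inr (Or.inl ⟨k, ha, hb⟩))
  -- successor of a cluster world stays in the cluster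
  have hsucc0 : ∀ (k : Fin (j0+1)) (a v : M0.W), a ∈ C0 k → M0.R a v → v ∈ C0 k := by
    intro k a v ha hav
    rcases (hR0 a v).1 hav with rfl | ⟨l, hl1, hl2⟩ | rfl
    · exact ha
    · rwa [hmem0 a k l ha hl1]
    · exact absurd ha (hx0 k)
  have hsucc1 : ∀ (k : Fin (j1+1)) (a v : M1.W), a ∈ C1 k → M1.R a v → v ∈ C1 k := by
    intro k a v ha hav
    rcases (hR1 a v).1 hav with rfl | ⟨l, hl1, hl2⟩ | rfl
    · exact ha
    · rwa [hmem1 a k l ha hl1]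
    · exact absurd ha (hx1 k)
  refine ⟨AmFrame M0 M1 P, Sum.inl (), amf0 M0 M1 P w0, amf1 M0 M1 P w1,
    ?_, ?_, ?_, rfl, rfl, ?_⟩
  · -- class membership
    intro V
    haveI := hfin0
    haveI := hfin1
    haveI : Finite (M0.W × M1.W) := inferInstance
    haveI : Finite {q : M0.W × M1.W // P q} := Subtype.finite
    haveI hfinW : Finite (AmW M0 M1 P) := by
      unfold AmW; infer_instance
    refine ⟨hfinW, ?_⟩
    -- clusters of the amalgam
    set D : (Fin (j0+1) × Fin (j1+1)) → Set (AmW M0 M1 P) := fun p =>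
      {w | ∃ q : {q : M0.W × M1.W // P q}, w = Sum.inr q ∧ q.1.1 ∈ C0 p.1 ∧ q.1.2 ∈ C1 p.2}
      with hD
    set I : Type := {p : Fin (j0+1) × Fin (j1+1) // p ∈ S ∧ (D p).Nonempty} with hI
    haveI : Finite I := Subtype.finite
    haveI : Fintype I := Fintype.ofFinite I
    -- I is nonempty
    obtain ⟨p0, hp0⟩ := hSne
    obtain ⟨u0, hu0⟩ := hSclne p0 hp0
    obtain ⟨u1, hu1, harr⟩ := (hSm p0 hp0).1 u0 hu0
    have hq0 : P (u0, u1) := ⟨p0, hp0, hu0, hu1, harr⟩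
    have hIne : Nonempty I :=
      ⟨⟨p0, hp0, ⟨Sum.inr ⟨(u0, u1), hq0⟩, ⟨(u0, u1), hq0⟩, rfl, hu0, hu1⟩⟩⟩
    have hn : 0 < Fintype.card I := Fintype.card_pos
    set n := Fintype.card I with hn'
    have hcast : n - 1 + 1 = n := by omega
    set e : Fin (n - 1 + 1) → I := fun i => (Fintype.equivFin I).symm (Fin.cast hcast i)
      with he
    have hei : Function.Injective e := by
      intro i j hij
      have := (Fintype.equivFin I).symm.injective hij
      exact Fin.cast_injective hcast this
    have hecast : ∀ y : I, e (Fin.cast hcast.symm ((Fintype.equivFin I) y)) = y := by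
      intro y
      have h2 : Fin.cast hcast (Fin.cast hcast.symm ((Fintype.equivFin I) y)) =
          (Fintype.equivFin I) y := Fin.ext rfl
      simp only [he]
      rw [h2]
      exact (Fintype.equivFin I).symm_apply_apply y
    refine ⟨Sum.inl (), n - 1, fun i => D (e i).1, ?_, ?_, ?_, ?_, ?_⟩
    · rintro k ⟨q, hq, -⟩; exact Sum.inl_ne_inr hq
    · intro k; exact (e k).2.2
    · intro k l hkl
      refine Set.disjoint_left.2 ?_
      rintro w ⟨q, rfl, hq1, hq2⟩ ⟨q', hq', hq1', hq2'⟩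
      obtain rfl : q = q' := Sum.inr_injective hq'
      have : (e k).1 = (e l).1 :=
        Prod.ext (hmem0 _ _ _ hq1 hq1') (hmem1 _ _ _ hq2 hq2')
      exact hkl (hei (Subtype.ext this))
    · intro w
      cases w with
      | inl u => left; cases u; rfl
      | inr q =>
        right
        obtain ⟨p, hpS, h1, h2, -⟩ := q.2
        have hpI : p ∈ S ∧ (D p).Nonempty := ⟨hpS, ⟨Sum.inr q, q, rfl, h1, h2⟩⟩
        refine ⟨(Fin.cast hcast.symm) ((Fintype.equivFin I) ⟨p, hpI⟩), ?_⟩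
        show Sum.inr q ∈ D (e ((Fin.cast hcast.symm) ((Fintype.equivFin I) ⟨p, hpI⟩))).1
        rw [hecast ⟨p, hpI⟩]
        exact ⟨q, rfl, h1, h2⟩
    · intro u v
      cases u with
      | inl u =>
        constructor
        · intro _
          right; right; cases u; rfl
        · intro _; trivial
      | inr a =>
        cases v with
        | inl v =>
          constructor
          · intro h; exact h.elim
          · rintro (h | ⟨k, hk1, ⟨q, hq, -⟩⟩ | h)
            · exact Sum.inr_ne_inl h
            · exact Sum.inl_ne_inr hq
            · exact Sum.inr_ne_inl h
        | inr b =>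
          constructor
          · rintro ⟨h1, h2, h3, h4⟩
            obtain ⟨pa, hpaS, ha1, ha2, -⟩ := a.2
            obtain ⟨pb, hpbS, hb1, hb2, -⟩ := b.2
            have hk : pa.1 = pb.1 := key0 _ _ _ _ ha1 hb1 h1
            have hl : pa.2 = pb.2 := key1 _ _ _ _ ha2 hb2 h3
            have hpab : pa = pb := Prod.ext hk hl
            right; left
            have hpI : pa ∈ S ∧ (D pa).Nonempty := ⟨hpaS, ⟨Sum.inr a, a, rfl, ha1, ha2⟩⟩
            refine ⟨(Fin.cast hcast.symm) ((Fintype.equivFin I) ⟨pa, hpI⟩), ?_, ?_⟩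
            · show Sum.inr a ∈ D (e ((Fin.cast hcast.symm) ((Fintype.equivFin I) ⟨pa, hpI⟩))).1
              rw [hecast ⟨pa, hpI⟩]
              exact ⟨a, rfl, ha1, ha2⟩
            · show Sum.inr b ∈ D (e ((Fin.cast hcast.symm) ((Fintype.equivFin I) ⟨pa, hpI⟩))).1
              rw [hecast ⟨pa, hpI⟩]
              exact ⟨b, rfl, hpab ▸ hb1, hpab ▸ hb2⟩
          · rintro (h | ⟨k, ⟨qa, hqa, ha1, ha2⟩, ⟨qb, hqb, hb1, hb2⟩⟩ | h)
            · rw [h]; show AmR M0 M1 P (Sum.inr b) (Sum.inr b); exact AmR_refl M0 M1 P _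
            · obtain rfl : a = qa := Sum.inr_injective hqa
              obtain rfl : b = qb := Sum.inr_injective hqb
              exact ⟨hclR0 _ _ _ ha1 hb1, hclR0 _ _ _ hb1 ha1,
                     hclR1 _ _ _ ha2 hb2, hclR1 _ _ _ hb2 ha2⟩
            · exact absurd h Sum.inr_ne_inl
  · -- p-morphism f0
    constructor
    · intro a b hab
      cases a with
      | inl u =>
        cases b with
        | inl v => exact M0.refl w0
        | inr q =>
          obtain ⟨p, hpS, h1, -, -⟩ := q.2
          exact hfwd0 p hpS _ h1
      | inr qa =>
        cases b with
        | inl v => exact hab.elim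
        | inr qb => exact hab.1
    · intro a v hv
      cases a with
      | inl u =>
        rcases hback0 v hv with rfl | ⟨p, hpS, hvC⟩
        · exact ⟨Sum.inl (), trivial, rfl⟩
        · obtain ⟨v1, hv1, harr⟩ := (hSm p hpS).1 v hvC
          exact ⟨Sum.inr ⟨(v, v1), p, hpS, hvC, hv1, harr⟩, trivial, rfl⟩
      | inr qa =>
        obtain ⟨pa, hpaS, ha1, ha2, -⟩ := qa.2
        have hvC : v ∈ C0 pa.1 := hsucc0 _ _ _ ha1 hv
        obtain ⟨v1, hv1, harr⟩ := (hSm pa hpaS).1 v hvC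
        refine ⟨Sum.inr ⟨(v, v1), pa, hpaS, hvC, hv1, harr⟩, ?_, rfl⟩
        exact ⟨hv, hclR0 _ _ _ hvC ha1, hclR1 _ _ _ ha2 hv1, hclR1 _ _ _ hv1 ha2⟩
  · -- p-morphism f1
    constructor
    · intro a b hab
      cases a with
      | inl u =>
        cases b with
        | inl v => exact M1.refl w1
        | inr q =>
          obtain ⟨p, hpS, -, h2, -⟩ := q.2
          exact hfwd1 p hpS _ h2
      | inr qa =>
        cases b with
        | inl v => exact hab.elim
        | inr qb => exact hab.2.2.1
    · intro a v hv
      cases a with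
      | inl u =>
        rcases hback1 v hv with rfl | ⟨p, hpS, hvC⟩
        · exact ⟨Sum.inl (), trivial, rfl⟩
        · obtain ⟨v0, hv0, harr⟩ := (hSm p hpS).2 v hvC
          exact ⟨Sum.inr ⟨(v0, v), p, hpS, hv0, hvC, harr⟩, trivial, rfl⟩
      | inr qa =>
        obtain ⟨pa, hpaS, ha1, ha2, -⟩ := qa.2
        have hvC : v ∈ C1 pa.2 := hsucc1 _ _ _ ha2 hv
        obtain ⟨v0, hv0, harr⟩ := (hSm pa hpaS).2 v hvC
        refine ⟨Sum.inr ⟨(v0, v), pa, hpaS, hv0, hvC, harr⟩, ?_, rfl⟩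
        exact ⟨hclR0 _ _ _ ha1 hv0, hclR0 _ _ _ hv0 ha1, hv, hclR1 _ _ _ hvC ha2⟩
  · -- arrow condition
    intro x
    cases x with
    | inl u => exact H0
    | inr q =>
      obtain ⟨p, hpS, h1, h2, harr⟩ := q.2
      exact harr

end IPAux
theorem stmt17 : EnjoysIP C_LP2o1 3 := by
  classical
  intro Pp Pm M0 M1 hM0 hM1 w0 w1 H3
  obtain ⟨hfin0, x0, j0, C0, hx0, hne0, hdisj0, hcov0, hR0⟩ := hM0
  obtain ⟨hfin1, x1, j1, C1, hx1, hne1, hdisj1, hcov1, hR1⟩ := hM1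
  haveI := hfin0
  haveI := hfin1
  have H0 : ModalArrow Pp Pm 0 M0 w0 M1 w1 :=
    fun φ hp hm hd => H3 φ hp hm (hd.trans (by norm_num))
  -- cluster structure helpers
  have hmem0 : ∀ (u : M0.W) (k l), u ∈ C0 k → u ∈ C0 l → k = l := by
    intro u k l hk hl
    by_contra h
    exact Set.disjoint_left.mp (hdisj0 k l h) hk hl
  have hmem1 : ∀ (u : M1.W) (k l), u ∈ C1 k → u ∈ C1 l → k = l := by
    intro u k l hk hl
    by_contra h
    exact Set.disjoint_left.mp (hdisj1 k l h) hk hl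
  have hclR0 : ∀ (k : Fin (j0+1)) (a b : M0.W), a ∈ C0 k → b ∈ C0 k → M0.R a b :=
    fun k a b ha hb => (hR0 a b).2 (Or.inr (Or.inl ⟨k, ha, hb⟩))
  have hclR1 : ∀ (k : Fin (j1+1)) (a b : M1.W), a ∈ C1 k → b ∈ C1 k → M1.R a b :=
    fun k a b ha hb => (hR1 a b).2 (Or.inr (Or.inl ⟨k, ha, hb⟩))
  have hrtR0 : ∀ v, M0.R x0 v := fun v => (hR0 x0 v).2 (Or.inr (Or.inr rfl))
  have hrtR1 : ∀ v, M1.R x1 v := fun v => (hR1 x1 v).2 (Or.inr (Or.inr rfl))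
  have hsucc0 : ∀ (k : Fin (j0+1)) (a v : M0.W), a ∈ C0 k → M0.R a v → v ∈ C0 k := by
    intro k a v ha hav
    rcases (hR0 a v).1 hav with rfl | ⟨l, hl1, hl2⟩ | rfl
    · exact ha
    · rwa [hmem0 a k l ha hl1]
    · exact absurd ha (hx0 k)
  have hsucc1 : ∀ (k : Fin (j1+1)) (a v : M1.W), a ∈ C1 k → M1.R a v → v ∈ C1 k := by
    intro k a v ha hav
    rcases (hR1 a v).1 hav with rfl | ⟨l, hl1, hl2⟩ | rfl
    · exact ha
    · rwa [hmem1 a k l ha hl1]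
    · exact absurd ha (hx1 k)
  -- cluster finsets and theta formulas for M0
  set s0 : Fin (j0+1) → Finset M0.W := fun k => ((C0 k).toFinite).toFinset with hs0
  have hmems0 : ∀ k (u : M0.W), u ∈ s0 k ↔ u ∈ C0 k := by
    intro k u; rw [hs0]; exact Set.Finite.mem_toFinset _
  set Θ : Fin (j0+1) → ModalForm := fun k => IPAux.theta Pp Pm M0 (s0 k) with hΘ
  have hsR0 : ∀ k (v w : M0.W), v ∈ s0 k → (M0.R v w ↔ w ∈ s0 k) := by
    intro k v w hv
    rw [hmems0] at hv
    rw [hmems0]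
    exact ⟨fun h => hsucc0 k v w hv h, fun h => hclR0 k v w hv h⟩
  have F1 : ∀ k, ∀ u ∈ C0 k, M0.Sat u (Θ k) := by
    intro k u hu
    exact IPAux.sat_theta_self Pp Pm M0 (s0 k) u ((hmems0 k u).2 hu) (hsR0 k)
  have F2 : ∀ (k : Fin (j0+1)) (l : Fin (j1+1)) (v1 : M1.W), v1 ∈ C1 l →
      M1.Sat v1 (Θ k) → Matches Pp Pm M0 M1 (C0 k) (C1 l) := by
    intro k l v1 hv1 hsat
    have hclR : ∀ (v u : M1.W), v ∈ C1 l → (M1.R v u ↔ u ∈ C1 l) :=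
      fun v u hv => ⟨fun h => hsucc1 l v u hv h, fun h => hclR1 l v u hv h⟩
    have := IPAux.matches_of_sat_theta Pp Pm M0 M1 (s0 k) (C1 l) v1 hv1 hclR hsat
    rwa [hs0, Set.Finite.coe_toFinset] at this
  have hvpΘ : ∀ k, ModalForm.vpos (Θ k) ⊆ Pp := fun k => IPAux.vpos_theta _ _ _ _
  have hvnΘ : ∀ k, ModalForm.vneg (Θ k) ⊆ Pm := fun k => IPAux.vneg_theta _ _ _ _
  have hdΘ : ∀ k, ModalForm.depth (Θ k) ≤ 1 := fun k => IPAux.depth_theta _ _ _ _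
  -- main case split
  rcases hcov0 w0 with rfl | ⟨k0, hk0⟩
  · rcases hcov1 w1 with rfl | ⟨l1, hl1⟩
    · -- both roots
      have A : ∀ k, ∃ l, Matches Pp Pm M0 M1 (C0 k) (C1 l) := by
        intro k
        have hsatφ : M0.Sat w0 (ModalForm.dia (ModalForm.box (Θ k))) := by
          rw [IPAux.sat_dia]
          obtain ⟨u, hu⟩ := hne0 k
          refine ⟨u, hrtR0 u, ?_⟩
          intro z hz
          exact F1 k z (hsucc0 k u z hu hz)
        have hsatψ : M1.Sat w1 (ModalForm.dia (ModalForm.box (Θ k))) := by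
          apply H3 _ _ _ _ hsatφ
          · rw [IPAux.vpos_dia]; simpa [ModalForm.vpos] using hvpΘ k
          · rw [IPAux.vneg_dia]; simpa [ModalForm.vneg] using hvnΘ k
          · rw [IPAux.depth_dia, IPAux.depth_box]
            have := hdΘ k; omega
        rw [IPAux.sat_dia] at hsatψ
        obtain ⟨y, hy, hsy⟩ := hsatψ
        rcases hcov1 y with rfl | ⟨l, hl⟩
        · obtain ⟨v, hv⟩ := hne1 0
          exact ⟨0, F2 k 0 v hv (hsy v (hrtR1 v))⟩
        · exact ⟨l, F2 k l y hl (hsy y (M1.refl y))⟩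
      have B : ∀ l, ∃ k, Matches Pp Pm M0 M1 (C0 k) (C1 l) := by
        intro l
        set ΔL : List ModalForm := (List.finRange (j0+1)).map Θ with hΔL
        set Φ : ModalForm := .box (ModalForm.dia (IPAux.disjList ΔL)) with hΦ
        have hsatφ : M0.Sat w0 Φ := by
          intro y hy
          rw [IPAux.sat_dia]
          rcases hcov0 y with rfl | ⟨k, hk⟩
          · obtain ⟨u, hu⟩ := hne0 0
            refine ⟨u, hrtR0 u, ?_⟩
            rw [IPAux.sat_disjList]
            exact ⟨Θ 0, by simp [hΔL], F1 0 u hu⟩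
          · refine ⟨y, M0.refl y, ?_⟩
            rw [IPAux.sat_disjList]
            exact ⟨Θ k, by simp [hΔL], F1 k y hk⟩
        have hsatψ : M1.Sat w1 Φ := by
          apply H3 _ _ _ _ hsatφ
          · simp only [hΦ, ModalForm.vpos, IPAux.vpos_dia]
            apply IPAux.vpos_disjList
            intro φ hφ
            simp only [hΔL, List.mem_map] at hφ
            obtain ⟨k, -, rfl⟩ := hφ
            exact hvpΘ k
          · simp only [hΦ, ModalForm.vneg, IPAux.vneg_dia]
            apply IPAux.vneg_disjList
            intro φ hφ
            simp only [hΔL, List.mem_map] at hφ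
            obtain ⟨k, -, rfl⟩ := hφ
            exact hvnΘ k
          · simp only [hΦ, ModalForm.depth, IPAux.depth_dia]
            have : ModalForm.depth (IPAux.disjList ΔL) ≤ 1 := by
              apply IPAux.depth_disjList
              intro φ hφ
              simp only [hΔL, List.mem_map] at hφ
              obtain ⟨k, -, rfl⟩ := hφ
              exact hdΘ k
            omega
        obtain ⟨v, hv⟩ := hne1 l
        have := hsatψ v (hrtR1 v)
        rw [IPAux.sat_dia] at this
        obtain ⟨z, hz, hsz⟩ := this
        rw [IPAux.sat_disjList] at hsz
        obtain ⟨φ, hφ, hsφ⟩ := hsz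
        simp only [hΔL, List.mem_map] at hφ
        obtain ⟨k, -, rfl⟩ := hφ
        exact ⟨k, F2 k l z (hsucc1 l v z hv hz) hsφ⟩
      refine IPAux.master Pp Pm M0 M1 hfin0 hfin1 w0 j0 C0 hx0 hdisj0 hR0
        w1 j1 C1 hx1 hdisj1 hR1 w0 w1 H0
        {p | Matches Pp Pm M0 M1 (C0 p.1) (C1 p.2)}
        (fun p hp => hp) (fun p _ => hne0 p.1) ?_ ?_ ?_ ?_ ?_
      · obtain ⟨l, hl⟩ := A 0
        exact ⟨(0, l), hl⟩
      · intro p _ u _; exact hrtR0 u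
      · intro p _ u _; exact hrtR1 u
      · intro v hv
        rcases hcov0 v with rfl | ⟨k, hk⟩
        · exact Or.inl rfl
        · obtain ⟨l, hl⟩ := A k
          exact Or.inr ⟨(k, l), hl, hk⟩
      · intro v hv
        rcases hcov1 v with rfl | ⟨l, hl⟩
        · exact Or.inl rfl
        · obtain ⟨k, hk⟩ := B l
          exact Or.inr ⟨(k, l), hk, hl⟩
    · -- w0 root, w1 in cluster l1
      have A : ∀ k, Matches Pp Pm M0 M1 (C0 k) (C1 l1) := by
        intro k
        have hsatφ : M0.Sat w0 (ModalForm.dia (Θ k)) := by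
          rw [IPAux.sat_dia]
          obtain ⟨u, hu⟩ := hne0 k
          exact ⟨u, hrtR0 u, F1 k u hu⟩
        have hsatψ : M1.Sat w1 (ModalForm.dia (Θ k)) := by
          apply H3 _ _ _ _ hsatφ
          · rw [IPAux.vpos_dia]; exact hvpΘ k
          · rw [IPAux.vneg_dia]; exact hvnΘ k
          · rw [IPAux.depth_dia]; have := hdΘ k; omega
        rw [IPAux.sat_dia] at hsatψ
        obtain ⟨y, hy, hsy⟩ := hsatψ
        exact F2 k l1 y (hsucc1 l1 w1 y hl1 hy) hsy
      refine IPAux.master Pp Pm M0 M1 hfin0 hfin1 w0 j0 C0 hx0 hdisj0 hR0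
        x1 j1 C1 hx1 hdisj1 hR1 w0 w1 H0
        {p | p.2 = l1}
        (fun p hp => hp ▸ A p.1) (fun p _ => hne0 p.1) ⟨(0, l1), rfl⟩ ?_ ?_ ?_ ?_
      · intro p _ u _; exact hrtR0 u
      · rintro p hp u hu
        exact hclR1 l1 w1 u hl1 (hp ▸ hu)
      · intro v hv
        rcases hcov0 v with rfl | ⟨k, hk⟩
        · exact Or.inl rfl
        · exact Or.inr ⟨(k, l1), rfl, hk⟩
      · intro v hv
        exact Or.inr ⟨(0, l1), rfl, hsucc1 l1 w1 v hl1 hv⟩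
  · rcases hcov1 w1 with rfl | ⟨l1, hl1⟩
    · -- w0 in cluster k0, w1 root
      have A : ∀ l, Matches Pp Pm M0 M1 (C0 k0) (C1 l) := by
        intro l
        have hsatφ : M0.Sat w0 (ModalForm.box (Θ k0)) := by
          intro y hy
          exact F1 k0 y (hsucc0 k0 w0 y hk0 hy)
        have hsatψ : M1.Sat w1 (ModalForm.box (Θ k0)) := by
          apply H3 _ _ _ _ hsatφ
          · simpa [ModalForm.vpos] using hvpΘ k0
          · simpa [ModalForm.vneg] using hvnΘ k0
          · rw [IPAux.depth_box]; have := hdΘ k0; omega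
        obtain ⟨v, hv⟩ := hne1 l
        exact F2 k0 l v hv (hsatψ v (hrtR1 v))
      refine IPAux.master Pp Pm M0 M1 hfin0 hfin1 x0 j0 C0 hx0 hdisj0 hR0
        w1 j1 C1 hx1 hdisj1 hR1 w0 w1 H0
        {p | p.1 = k0}
        (fun p hp => hp ▸ A p.2) (fun p hp => hp ▸ hne0 k0) ⟨(k0, 0), rfl⟩ ?_ ?_ ?_ ?_
      · rintro p hp u hu
        exact hclR0 k0 w0 u hk0 (hp ▸ hu)
      · intro p _ u _; exact hrtR1 u
      · intro v hv
        exact Or.inr ⟨(k0, 0), rfl, hsucc0 k0 w0 v hk0 hv⟩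
      · intro v hv
        rcases hcov1 v with rfl | ⟨l, hl⟩
        · exact Or.inl rfl
        · exact Or.inr ⟨(k0, l), rfl, hl⟩
    · -- both in clusters
      have A : Matches Pp Pm M0 M1 (C0 k0) (C1 l1) := by
        have hsatφ : M0.Sat w0 (Θ k0) := F1 k0 w0 hk0
        have hsatψ : M1.Sat w1 (Θ k0) :=
          H3 _ (hvpΘ k0) (hvnΘ k0) ((hdΘ k0).trans (by norm_num)) hsatφ
        exact F2 k0 l1 w1 hl1 hsatψ
      refine IPAux.master Pp Pm M0 M1 hfin0 hfin1 x0 j0 C0 hx0 hdisj0 hR0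
        x1 j1 C1 hx1 hdisj1 hR1 w0 w1 H0
        {(k0, l1)}
        ?_ ?_ ⟨(k0, l1), rfl⟩ ?_ ?_ ?_ ?_
      · rintro p rfl; exact A
      · rintro p rfl; exact hne0 k0
      · rintro p rfl u hu
        exact hclR0 k0 w0 u hk0 hu
      · rintro p rfl u hu
        exact hclR1 l1 w1 u hl1 hu
      · intro v hv
        exact Or.inr ⟨(k0, l1), rfl, hsucc0 k0 w0 v hk0 hv⟩
      · intro v hv
        exact Or.inr ⟨(k0, l1), rfl, hsucc1 l1 w1 v hl1 hv⟩
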